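/- Let Δ be a finite abstract simplicial complex on a finite ground set E, let F be a face of Δ, and suppose there exists a cone vertex c ∈ E − F for F in Δ. Then Δ collapses onto the deletion dl_Δ(F). -/

import Mathlib

/-- A finite abstract simplicial complex on the ground set `E`: a downward closed
collection of finite subsets of `E`. -/
structure AbsCplx (E : Type*) where
  faces : Set (Finset E)
  down : ∀ F ∈ faces, ∀ F' ⊆ F, F' ∈ faces

/-- `Δ'` is obtained from `Δ` by an elementary collapse: there is a facet `F` and a face
`F' ⊂ F` with `|F'| = |F| - 1` such that `F` is the unique face of `Δ` properly containing
`F'`, and `Δ' = Δ - {F, F'}`. -/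
def IsElemCollapse {E : Type*} (Δ Δ' : AbsCplx E) : Prop :=
  ∃ F F' : Finset E, F ∈ Δ.faces ∧ F' ∈ Δ.faces ∧ F' ⊂ F ∧ F'.card + 1 = F.card ∧
    (∀ G ∈ Δ.faces, F ⊆ G → G = F) ∧
    (∀ G ∈ Δ.faces, F' ⊂ G → G = F) ∧
    Δ'.faces = Δ.faces \ {F, F'}

/-- `Δ` collapses onto `Δ'` if `Δ'` is obtained from `Δ` by a finite sequence of
elementary collapses. -/
def CollapsesOnto {E : Type*} (Δ Δ' : AbsCplx E) : Prop :=
  Relation.ReflTransGen (fun X Y => IsElemCollapse X Y) Δ Δ'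

/-- The deletion `dl_Δ(F)`: the faces of `Δ` not containing `F`. -/
def deletion {E : Type*} (Δ : AbsCplx E) (F : Finset E) : AbsCplx E where
  faces := { G | G ∈ Δ.faces ∧ ¬F ⊆ G }
  down := fun G hG G' hsub =>
    ⟨Δ.down G hG.1 G' hsub, fun hFG' => hG.2 (Finset.Subset.trans hFG' hsub)⟩

theorem AbsCplx.ext' {E : Type*} {Δ Δ' : AbsCplx E} (h : Δ.faces = Δ'.faces) : Δ = Δ' := by
  cases Δ; cases Δ'; simpa using h

theorem aux_collapse {E : Type*} [Fintype E] [DecidableEq E] (F : Finset E) (c : E)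
    (hc : c ∉ F) :
    ∀ n (Δ : AbsCplx E), (∀ G ∈ Δ.faces, F ⊆ G → insert c G ∈ Δ.faces) →
      ({G | G ∈ Δ.faces ∧ F ⊆ G}).ncard ≤ n → CollapsesOnto Δ (deletion Δ F) := by
  intro n
  induction n with
  | zero =>
    intro Δ hcone hcard
    have hfin : ({G | G ∈ Δ.faces ∧ F ⊆ G}).Finite := Set.toFinite _
    have hempty : {G | G ∈ Δ.faces ∧ F ⊆ G} = ∅ := by
      rw [← Set.ncard_eq_zero hfin]; omega
    have : Δ = deletion Δ F := by
      apply AbsCplx.ext'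
      ext G
      simp only [deletion, Set.mem_setOf_eq]
      constructor
      · intro hG
        refine ⟨hG, fun hFG => ?_⟩
        have : G ∈ ({G | G ∈ Δ.faces ∧ F ⊆ G} : Set (Finset E)) := ⟨hG, hFG⟩
        rw [hempty] at this; exact this
      · exact fun h => h.1
    rw [← this]
    exact Relation.ReflTransGen.refl
  | succ n ih =>
    intro Δ hcone hcard
    set S : Set (Finset E) := {G | G ∈ Δ.faces ∧ F ⊆ G} with hS
    have hfin : S.Finite := Set.toFinite _
    by_cases hne : S = ∅
    · have : Δ = deletion Δ F := by
        apply AbsCplx.ext'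
        ext G
        simp only [deletion, Set.mem_setOf_eq]
        constructor
        · intro hG
          refine ⟨hG, fun hFG => ?_⟩
          have : G ∈ S := ⟨hG, hFG⟩
          rw [hne] at this; exact this
        · exact fun h => h.1
      rw [← this]
      exact Relation.ReflTransGen.refl
    · -- pick G of maximal card in S
      have hSne : hfin.toFinset.Nonempty := by
        rw [Set.Finite.toFinset_nonempty]; exact Set.nonempty_iff_ne_empty.2 hne
      obtain ⟨G, hGmem, hGmax⟩ := hfin.toFinset.exists_max_image Finset.card hSne
      rw [Set.Finite.mem_toFinset] at hGmem
      obtain ⟨hGf, hFG⟩ := hGmem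
      have hmax : ∀ H ∈ S, H.card ≤ G.card := fun H hH =>
        hGmax H (hfin.mem_toFinset.2 hH)
      -- c ∈ G
      have hcG : c ∈ G := by
        by_contra hcG
        have h1 : insert c G ∈ S := ⟨hcone G hGf hFG, hFG.trans (Finset.subset_insert _ _)⟩
        have := hmax _ h1
        rw [Finset.card_insert_of_notMem hcG] at this
        omega
      set G' := G.erase c with hG'
      have hG'sub : G' ⊂ G := Finset.erase_ssubset hcG
      have hG'f : G' ∈ Δ.faces := Δ.down G hGf G' hG'sub.subset
      have hFG' : F ⊆ G' := fun x hx => Finset.mem_erase.2 ⟨fun h => hc (h ▸ hx), hFG hx⟩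
      have hcardG' : G'.card + 1 = G.card := by
        rw [hG', Finset.card_erase_of_mem hcG]
        have : 0 < G.card := Finset.card_pos.2 ⟨c, hcG⟩
        omega
      have hinsG' : insert c G' = G := Finset.insert_erase hcG
      -- G is a facet
      have h1 : ∀ H ∈ Δ.faces, G ⊆ H → H = G := by
        intro H hH hGH
        have : H ∈ S := ⟨hH, hFG.trans hGH⟩
        exact (Finset.eq_of_subset_of_card_le hGH (hmax H this)).symm
      -- G is unique face properly containing G'
      have h2 : ∀ H ∈ Δ.faces, G' ⊂ H → H = G := by
        intro H hH hG'H
        have hFH : F ⊆ H := hFG'.trans hG'H.subset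
        have hins : insert c H ∈ Δ.faces := hcone H hH hFH
        have hGsub : G ⊆ insert c H := by
          rw [← hinsG']; exact Finset.insert_subset_insert _ hG'H.subset
        have heq : insert c H = G := h1 _ hins hGsub
        have hHG : H ⊆ G := heq ▸ Finset.subset_insert _ _
        apply Finset.eq_of_subset_of_card_le hHG
        have := Finset.card_lt_card hG'H
        omega
      -- the collapsed complex
      have hdown : ∀ H ∈ Δ.faces \ {G, G'}, ∀ H' ⊆ H, H' ∈ Δ.faces \ {G, G'} := by
        rintro H ⟨hHf, hHn⟩ H' hH'H
        simp only [Set.mem_insert_iff, Set.mem_singleton_iff, not_or] at hHn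
        refine ⟨Δ.down H hHf H' hH'H, ?_⟩
        simp only [Set.mem_diff, Set.mem_insert_iff, Set.mem_singleton_iff, not_or]
        constructor
        · rintro rfl
          exact hHn.1 (h1 H hHf hH'H)
        · intro heq
          rcases eq_or_ne H H' with rfl | hne'
          · exact hHn.2 heq
          · have hss : H' ⊂ H := lt_of_le_of_ne hH'H (Ne.symm hne')
            exact hHn.1 (h2 H hHf (heq ▸ hss))
      set Δ₁ : AbsCplx E := ⟨Δ.faces \ {G, G'}, hdown⟩ with hΔ₁
      have hstep : IsElemCollapse Δ Δ₁ :=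
        ⟨G, G', hGf, hG'f, hG'sub, hcardG', h1, h2, rfl⟩
      -- cone property for Δ₁
      have hcone₁ : ∀ H ∈ Δ₁.faces, F ⊆ H → insert c H ∈ Δ₁.faces := by
        rintro H ⟨hHf, hHn⟩ hFH
        simp only [Set.mem_insert_iff, Set.mem_singleton_iff, not_or] at hHn
        refine ⟨hcone H hHf hFH, ?_⟩
        simp only [Set.mem_insert_iff, Set.mem_singleton_iff, not_or]
        constructor
        · intro heq
          have hHsub : H ⊆ G := heq ▸ Finset.subset_insert _ _
          by_cases hcH : c ∈ H
          · exact hHn.1 (by rw [← heq, Finset.insert_eq_self.2 hcH])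
          · have : H ⊆ G' := fun x hx =>
              Finset.mem_erase.2 ⟨fun h => hcH (h ▸ hx), hHsub hx⟩
            have hG'H : G' ⊆ H := by
              intro x hx
              have hxG : x ∈ G := (Finset.erase_subset _ _) hx
              have : x ∈ insert c H := heq ▸ hxG
              rcases Finset.mem_insert.1 this with rfl | h
              · exact absurd hx (Finset.notMem_erase _ _)
              · exact h
            exact hHn.2 (Finset.Subset.antisymm ‹H ⊆ G'› hG'H)
        · intro heq
          have hcmem : c ∈ insert c H := Finset.mem_insert_self c H
          rw [heq, hG'] at hcmem
          exact Finset.notMem_erase c G hcmem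
      -- ncard bound
      have hsub : {H | H ∈ Δ₁.faces ∧ F ⊆ H} ⊆ S \ {G} := by
        rintro H ⟨⟨hHf, hHn⟩, hFH⟩
        simp only [Set.mem_insert_iff, Set.mem_singleton_iff, not_or] at hHn
        exact ⟨⟨hHf, hFH⟩, hHn.1⟩
      have hGS : G ∈ S := ⟨hGf, hFG⟩
      have hcard₁ : ({H | H ∈ Δ₁.faces ∧ F ⊆ H}).ncard ≤ n := by
        have h3 : ({H | H ∈ Δ₁.faces ∧ F ⊆ H}).ncard ≤ (S \ {G}).ncard :=
          Set.ncard_le_ncard hsub hfin.diff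
        have h4 : (S \ {G}).ncard = S.ncard - 1 := by
          rw [Set.ncard_diff_singleton_of_mem hGS]
        have h5 : 0 < S.ncard := (Set.ncard_pos hfin).2 ⟨G, hGS⟩
        omega
      have hrest := ih Δ₁ hcone₁ hcard₁
      have hdel : deletion Δ₁ F = deletion Δ F := by
        apply AbsCplx.ext'
        ext H
        simp only [deletion, Set.mem_setOf_eq, hΔ₁, Set.mem_diff,
          Set.mem_insert_iff, Set.mem_singleton_iff, not_or]
        constructor
        · rintro ⟨⟨h, _⟩, hn⟩; exact ⟨h, hn⟩
        · rintro ⟨h, hn⟩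
          refine ⟨⟨h, ?_, ?_⟩, hn⟩
          · rintro rfl; exact hn hFG
          · rintro rfl; exact hn hFG'
      rw [← hdel]
      exact Relation.ReflTransGen.head hstep hrest


/-- Let `Δ` be a finite abstract simplicial complex on a finite ground set `E`, let `F`
be a face of `Δ`, and suppose there is a cone vertex `c ∈ E - F` for `F` in `Δ`
(i.e. `G ∪ {c}` is a face for every face `G ⊇ F`).  Then `Δ` collapses onto the
deletion `dl_Δ(F)`. -/
theorem collapsesOnto_deletion_of_coneVertex {E : Type*} [Fintype E] [DecidableEq E]
    (Δ : AbsCplx E) (F : Finset E) (hF : F ∈ Δ.faces) (c : E) (hc : c ∉ F)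
    (hcone : ∀ G ∈ Δ.faces, F ⊆ G → insert c G ∈ Δ.faces) :
    CollapsesOnto Δ (deletion Δ F) :=
  aux_collapse F c hc _ Δ hcone le_rfl
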